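/- For all real Q, the extremal mass function m_ext(Q) = (1/(3√6)) (√(1+12Q²)+2) (√(1+12Q²)−1)^{1/2} satisfies m_ext(Q) ≥ |Q|, with equality if and only if Q = 0. -/
import Mathlib


/-- Extremal Reissner–Nordström–AdS mass as a function of charge `Q`
(cosmological constant `Λ = -3`). -/
noncomputable def mextQ (Q : ℝ) : ℝ :=
  (1 / (3 * Real.sqrt 6)) * (Real.sqrt (1 + 12 * Q ^ 2) + 2) *
    Real.sqrt (Real.sqrt (1 + 12 * Q ^ 2) - 1)

theorem stmt0 (Q : ℝ) : |Q| ≤ mextQ Q ∧ (mextQ Q = |Q| ↔ Q = 0) := by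
  set s := Real.sqrt (1 + 12 * Q ^ 2) with hs
  have hnn : (0:ℝ) ≤ 1 + 12 * Q ^ 2 := by positivity
  have hs2 : s ^ 2 = 1 + 12 * Q ^ 2 := Real.sq_sqrt hnn
  have hs1 : 1 ≤ s := by
    have h := Real.sqrt_le_sqrt (show (1:ℝ) ≤ 1 + 12 * Q ^ 2 by nlinarith)
    rwa [Real.sqrt_one] at h
  have ht : (Real.sqrt (s - 1)) ^ 2 = s - 1 := Real.sq_sqrt (by linarith)
  have h6 : (Real.sqrt 6) ^ 2 = 6 := Real.sq_sqrt (by norm_num)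
  have h6pos : 0 < Real.sqrt 6 := Real.sqrt_pos.mpr (by norm_num)
  have hm0 : 0 ≤ mextQ Q := by
    unfold mextQ
    have h1 : 0 ≤ Real.sqrt (1 + 12 * Q ^ 2) := Real.sqrt_nonneg _
    positivity
  have hmsq : mextQ Q ^ 2 = (s + 2) ^ 2 * (s - 1) / 54 := by
    have e : mextQ Q ^ 2 =
        (1 / (3 * Real.sqrt 6)) ^ 2 * (s + 2) ^ 2 * (Real.sqrt (s - 1)) ^ 2 := by
      unfold mextQ; rw [← hs]; ring
    have hc : (1 / (3 * Real.sqrt 6)) ^ 2 = 1 / 54 := by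
      rw [div_pow, mul_pow, h6]; norm_num
    rw [e, ht, hc]; ring
  have key : Q ^ 2 ≤ mextQ Q ^ 2 := by
    nlinarith [sq_nonneg (s - 1), hs1]
  have hle : |Q| ≤ mextQ Q := by
    have := Real.sqrt_le_sqrt key
    rwa [Real.sqrt_sq_eq_abs, Real.sqrt_sq hm0] at this
  refine ⟨hle, ?_, ?_⟩
  · intro h
    have hsq : mextQ Q ^ 2 = Q ^ 2 := by rw [h, sq_abs]
    have hQ2 : Q ^ 2 = 0 := by nlinarith [sq_nonneg (s - 1), hs1]
    exact pow_eq_zero_iff (two_ne_zero) |>.mp hQ2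
  · rintro rfl
    have : s = 1 := by rw [hs]; norm_num
    unfold mextQ
    rw [← hs, this]
    norm_num
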